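/- Let f : [0,∞)×{1,…,n} → ℝ have each coordinate cadlag with nonnegative jumps, and fix endpoints p = (x,n), q = (y,m) with x ≤ y, m ≤ n. Then the supremum over paths π from p to q of |π|_f = Σ_{i=m}^{n} (f_i(t_{i-1}) - f_i(t_i⁻)) is attained: there exists a geodesic. -/

import Mathlib

open Filter Set

/-- Left limit with the convention `f(0⁻) = 0`. -/
noncomputable def lml (f : ℝ → ℝ) (z : ℝ) : ℝ := if z ≤ 0 then 0 else Function.leftLim f z

/-- Cadlag on `[0, ∞)`: right-continuous at every `x ≥ 0`, left limits exist at every `x > 0`. -/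
def Cadlag (f : ℝ → ℝ) : Prop :=
  (∀ x : ℝ, 0 ≤ x → ContinuousWithinAt f (Set.Ici x) x) ∧
  (∀ x : ℝ, 0 < x → ∃ l : ℝ, Filter.Tendsto f (nhdsWithin x (Set.Iio x)) (nhds l))

/-- All jumps are nonnegative (with the convention `f(0⁻) = 0`). -/
def NonnegJumps (f : ℝ → ℝ) : Prop := ∀ z : ℝ, 0 ≤ z → lml f z ≤ f z

/-- `S f₁ f₂ x y = sup_{z ∈ [x,y]} (f₂ z - f₁ (z⁻))`. -/
noncomputable def S (f₁ f₂ : ℝ → ℝ) (x y : ℝ) : ℝ :=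
  sSup ((fun z => f₂ z - lml f₁ z) '' Set.Icc x y)

/-- `Sm f₁ f₂ x y = sup_{z ∈ [x,y)} (f₂ z - f₁ (z⁻))`. -/
noncomputable def Sm (f₁ f₂ : ℝ → ℝ) (x y : ℝ) : ℝ :=
  sSup ((fun z => f₂ z - lml f₁ z) '' Set.Ico x y)

/-- Jump times of a path from `(x, a)` (bottom line `a`) to `(y, b)` (top line `b ≤ a`):
`t a = x`, `t (b-1) = y`, and `t` is nonincreasing in the index on `[b-1, a]`. -/
def IsPathJT (a b : ℕ) (x y : ℝ) (t : ℕ → ℝ) : Prop :=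
  t a = x ∧ t (b - 1) = y ∧ ∀ i : ℕ, b - 1 ≤ i → i < a → t (i + 1) ≤ t i

/-- Length of the path with jump times `t`: `∑_{i=b}^{a} (f_i(t_{i-1}) - f_i(t_i⁻))`. -/
noncomputable def pathLen (f : ℕ → ℝ → ℝ) (a b : ℕ) (t : ℕ → ℝ) : ℝ :=
  ∑ i ∈ Finset.Icc b a, (f i (t (i - 1)) - lml (f i) (t i))

/-- usc function attains max on compact nonempty set. -/
lemma usc_exists_max {X : Type*} [TopologicalSpace X] {K : Set X} (hK : IsCompact K)
    (hne : K.Nonempty) {φ : X → ℝ} (hφ : ∀ t ∈ K, UpperSemicontinuousWithinAt φ K t) :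
    ∃ t ∈ K, ∀ s ∈ K, φ s ≤ φ t := by
  haveI : CompactSpace K := isCompact_iff_compactSpace.mp hK
  set ψ : K → ℝ := fun u => φ u.1 with hψ
  have husc : UpperSemicontinuous ψ := by
    intro u c hc
    have h1 := hφ u.1 u.2 c hc
    have h2 : Tendsto (Subtype.val : K → X) (nhds u) (nhdsWithin u.1 K) := by
      rw [tendsto_nhdsWithin_iff]
      exact ⟨continuousAt_subtype_val, Filter.Eventually.of_forall fun v => v.2⟩
    exact h2.eventually h1
  by_contra hcon
  push_neg at hcon
  have hcov : (univ : Set K) ⊆ ⋃ s : K, ψ ⁻¹' Iio (ψ s) := by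
    intro u _
    obtain ⟨s, hs, hlt⟩ := hcon u.1 u.2
    exact mem_iUnion.2 ⟨⟨s, hs⟩, hlt⟩
  obtain ⟨F, hF⟩ := isCompact_univ.elim_finite_subcover _
    (fun s : K => husc.isOpen_preimage (ψ s)) hcov
  obtain ⟨u0⟩ : Nonempty K := hne.to_subtype
  have hu0 := hF (mem_univ u0)
  have hFne : F.Nonempty := by
    simp only [mem_iUnion] at hu0
    obtain ⟨s, hs, _⟩ := hu0
    exact ⟨s, hs⟩
  obtain ⟨m, hmF, hmax⟩ := F.exists_max_image ψ hFne
  have := hF (mem_univ m)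
  simp only [mem_iUnion] at this
  obtain ⟨s, hsF, hlt⟩ := this
  exact absurd (hmax s hsF) (not_le.mpr hlt)

/-- Cadlag with nonneg jumps is usc within `Icc x y ⊆ [0,∞)`. -/
lemma usc_of_cadlag {g : ℝ → ℝ} (hc : Cadlag g) (hj : NonnegJumps g) {x y z : ℝ}
    (hx : 0 ≤ x) (hz : z ∈ Icc x y) :
    UpperSemicontinuousWithinAt g (Icc x y) z := by
  intro c hc'
  have hz0 : 0 ≤ z := le_trans hx hz.1
  have hright : ∀ᶠ w in nhdsWithin z (Ici z), g w < c :=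
    (hc.1 z hz0).eventually_lt_const hc'
  have hleft : ∀ᶠ w in nhdsWithin z (Icc x y ∩ Iio z), g w < c := by
    rcases lt_or_eq_of_le hz0 with h0 | h0
    · obtain ⟨l, hl⟩ := hc.2 z h0
      have hll : Function.leftLim g z = l :=
        leftLim_eq_of_tendsto hl
      have hlle : l ≤ g z := by
        have := hj z hz0
        rw [lml, if_neg (not_le.mpr h0), hll] at this
        exact this
      exact (hl.eventually_lt_const (lt_of_le_of_lt hlle hc')).filter_mono
        (nhdsWithin_mono z inter_subset_right)
    · have : Icc x y ∩ Iio z = ∅ := by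
        apply eq_empty_of_forall_notMem
        intro w ⟨hw1, hw2⟩
        exact absurd (lt_of_lt_of_le hw2 (h0 ▸ hx.trans hw1.1 : z ≤ w)) (lt_irrefl _)
      rw [this, nhdsWithin_empty]
      exact eventually_bot
  have hsplit : nhdsWithin z (Icc x y) ≤
      nhdsWithin z (Icc x y ∩ Iio z) ⊔ nhdsWithin z (Ici z) := by
    rw [← nhdsWithin_union]
    apply nhdsWithin_mono
    intro w hw
    rcases lt_or_ge w z with h | h
    · exact Or.inl ⟨hw, h⟩
    · exact Or.inr h
  exact (eventually_sup.mpr ⟨hleft, hright⟩).filter_mono hsplit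

/-- For cadlag `g` with nonneg jumps, `lml g` is lsc within `Icc x y ⊆ [0,∞)`. -/
lemma lsc_lml {g : ℝ → ℝ} (hc : Cadlag g) (hj : NonnegJumps g) {x y z : ℝ}
    (hx : 0 ≤ x) (hz : z ∈ Icc x y) :
    LowerSemicontinuousWithinAt (lml g) (Icc x y) z := by
  intro c hc'
  have hz0 : 0 ≤ z := le_trans hx hz.1
  have hcg : c < g z := lt_of_lt_of_le hc' (hj z hz0)
  -- right side (incl. the point itself)
  have hright : ∀ᶠ w in nhdsWithin z (Ici z), c < lml g w := by
    obtain ⟨c'', h1, h2⟩ := exists_between hcg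
    have hev : ∀ᶠ w in nhdsWithin z (Ici z), c'' < g w :=
      (hc.1 z hz0).eventually_const_lt h2
    obtain ⟨u, hu, hsub⟩ := mem_nhdsGE_iff_exists_Ico_subset.mp hev
    have hIoi : ∀ᶠ w in nhdsWithin z (Ioi z), c < lml g w := by
      filter_upwards [Ioo_mem_nhdsGT_of_mem ⟨le_refl z, hu⟩] with w hw
      have hw0 : 0 < w := lt_of_le_of_lt hz0 hw.1
      obtain ⟨lw, hlw⟩ := hc.2 w hw0
      have hle : c'' ≤ lw := by
        refine ge_of_tendsto hlw ?_
        filter_upwards [Ioo_mem_nhdsLT_of_mem ⟨hw.1, le_refl w⟩] with v hv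
        exact le_of_lt (hsub ⟨le_of_lt hv.1, lt_trans hv.2 hw.2⟩)
      have : lml g w = lw := by
        rw [lml, if_neg (not_le.mpr hw0),
          leftLim_eq_of_tendsto hlw]
      rw [this]; exact lt_of_lt_of_le h1 hle
    have : Ici z = insert z (Ioi z) := by
      ext w; simp [le_iff_lt_or_eq, or_comm, eq_comm]
    rw [this, nhdsWithin_insert, eventually_sup]
    exact ⟨eventually_pure.mpr hc', hIoi⟩
  -- left side
  have hleft : ∀ᶠ w in nhdsWithin z (Icc x y ∩ Iio z), c < lml g w := by
    rcases lt_or_eq_of_le hz0 with h0 | h0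
    · obtain ⟨l, hl⟩ := hc.2 z h0
      have hll : lml g z = l := by
        rw [lml, if_neg (not_le.mpr h0),
          leftLim_eq_of_tendsto hl]
      obtain ⟨c'', h1, h2⟩ := exists_between (hll ▸ hc')
      have hev : ∀ᶠ w in nhdsWithin z (Iio z), c'' < g w :=
        hl.eventually_const_lt h2
      obtain ⟨u, hu, hsub⟩ := mem_nhdsLT_iff_exists_Ioo_subset.mp hev
      have hIio : ∀ᶠ w in nhdsWithin z (Iio z), c < lml g w := by
        have hu' : max u (z / 2) < z := max_lt hu (half_lt_self h0)
        filter_upwards [Ioo_mem_nhdsLT_of_mem ⟨hu', le_refl z⟩] with w hw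
        have hw0 : 0 < w := lt_trans (half_pos h0) (lt_of_le_of_lt (le_max_right u (z / 2)) hw.1)
        obtain ⟨lw, hlw⟩ := hc.2 w hw0
        have hle : c'' ≤ lw := by
          refine ge_of_tendsto hlw ?_
          filter_upwards [Ioo_mem_nhdsLT_of_mem ⟨lt_of_le_of_lt (le_max_left u (z / 2)) hw.1, le_refl w⟩] with v hv
          exact le_of_lt (hsub ⟨hv.1, lt_trans hv.2 hw.2⟩)
        have : lml g w = lw := by
          rw [lml, if_neg (not_le.mpr hw0),
            leftLim_eq_of_tendsto hlw]
        rw [this]; exact lt_of_lt_of_le h1 hle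
      exact hIio.filter_mono (nhdsWithin_mono z inter_subset_right)
    · have : Icc x y ∩ Iio z = ∅ := by
        apply eq_empty_of_forall_notMem
        intro w ⟨hw1, hw2⟩
        exact absurd (lt_of_lt_of_le hw2 (h0 ▸ hx.trans hw1.1 : z ≤ w)) (lt_irrefl _)
      rw [this, nhdsWithin_empty]
      exact eventually_bot
  have hsplit : nhdsWithin z (Icc x y) ≤
      nhdsWithin z (Icc x y ∩ Iio z) ⊔ nhdsWithin z (Ici z) := by
    rw [← nhdsWithin_union]
    apply nhdsWithin_mono
    intro w hw
    rcases lt_or_ge w z with h | h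
    · exact Or.inl ⟨hw, h⟩
    · exact Or.inr h
  exact (eventually_sup.mpr ⟨hleft, hright⟩).filter_mono hsplit

/-- Monotonicity along a path. -/
lemma path_mono {a b : ℕ} {t : ℕ → ℝ}
    (h : ∀ i : ℕ, b - 1 ≤ i → i < a → t (i + 1) ≤ t i)
    {i : ℕ} (hbi : b - 1 ≤ i) : ∀ j : ℕ, i ≤ j → j ≤ a → t j ≤ t i := by
  intro j
  induction j with
  | zero => intro hij _; simp [Nat.le_zero.mp hij]
  | succ j ih =>
    intro hij hja
    rcases Nat.lt_or_ge i (j + 1) with hlt | hge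
    · have hij' : i ≤ j := Nat.lt_succ_iff.mp hlt
      exact le_trans (h j (le_trans hbi hij') (Nat.lt_of_succ_le hja))
        (ih hij' (le_trans (Nat.le_succ j) hja))
    · have : i = j + 1 := le_antisymm hij hge
      simp [this]


lemma tendsto_eval {K : Set (ℕ → ℝ)} {D : Set ℝ} (j : ℕ) (hm : ∀ u ∈ K, u j ∈ D)
    (t : ℕ → ℝ) : Filter.Tendsto (fun u : ℕ → ℝ => u j) (nhdsWithin t K)
      (nhdsWithin (t j) D) :=
  tendsto_nhdsWithin_iff.mpr
    ⟨((continuous_apply j).continuousAt).mono_left nhdsWithin_le_nhds,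
     eventually_mem_nhdsWithin.mono fun u hu => hm u hu⟩

lemma usc_comp_eval {φ : ℝ → ℝ} {D : Set ℝ} {K : Set (ℕ → ℝ)} {t : ℕ → ℝ} (j : ℕ)
    (hm : ∀ u ∈ K, u j ∈ D) (h : UpperSemicontinuousWithinAt φ D (t j)) :
    UpperSemicontinuousWithinAt (fun u : ℕ → ℝ => φ (u j)) K t :=
  fun c hc => (tendsto_eval j hm t).eventually (h c hc)

lemma usc_comp_eval_neg {φ : ℝ → ℝ} {D : Set ℝ} {K : Set (ℕ → ℝ)} {t : ℕ → ℝ} (j : ℕ)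
    (hm : ∀ u ∈ K, u j ∈ D) (h : LowerSemicontinuousWithinAt φ D (t j)) :
    UpperSemicontinuousWithinAt (fun u : ℕ → ℝ => -φ (u j)) K t := by
  intro c hc
  have hc' : -c < φ (t j) := by simpa using neg_lt_of_neg_lt hc
  exact ((tendsto_eval j hm t).eventually (h (-c) hc')).mono fun u hu => by simp only []; linarith

theorem stmt15 (n a b : ℕ) (hb : 1 ≤ b) (hba : b ≤ a) (han : a ≤ n)
    (f : ℕ → ℝ → ℝ)
    (hcad : ∀ i : ℕ, 1 ≤ i → i ≤ n → Cadlag (f i))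
    (hjmp : ∀ i : ℕ, 1 ≤ i → i ≤ n → NonnegJumps (f i))
    (x y : ℝ) (hx : 0 ≤ x) (hxy : x ≤ y) :
    ∃ t : ℕ → ℝ, IsPathJT a b x y t ∧
      ∀ s : ℕ → ℝ, IsPathJT a b x y s → pathLen f a b s ≤ pathLen f a b t := by
  classical
  set K : Set (ℕ → ℝ) :=
    (Set.pi univ fun _ : ℕ => Icc x y) ∩ {t | IsPathJT a b x y t} with hKdef
  -- K is compact
  have hKcl : IsClosed {t : ℕ → ℝ | IsPathJT a b x y t} := by
    have h1 : IsClosed {t : ℕ → ℝ | t a = x} :=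
      isClosed_eq (continuous_apply a) continuous_const
    have h2 : IsClosed {t : ℕ → ℝ | t (b - 1) = y} :=
      isClosed_eq (continuous_apply (b - 1)) continuous_const
    have h3 : IsClosed {t : ℕ → ℝ | ∀ i : ℕ, b - 1 ≤ i → i < a → t (i + 1) ≤ t i} := by
      have : {t : ℕ → ℝ | ∀ i : ℕ, b - 1 ≤ i → i < a → t (i + 1) ≤ t i} =
          ⋂ i : ℕ, {t : ℕ → ℝ | b - 1 ≤ i → i < a → t (i + 1) ≤ t i} := by
        ext t; simp
      rw [this]
      refine isClosed_iInter fun i => ?_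
      by_cases hi1 : b - 1 ≤ i
      · by_cases hi2 : i < a
        · have : {t : ℕ → ℝ | b - 1 ≤ i → i < a → t (i + 1) ≤ t i} =
              {t : ℕ → ℝ | t (i + 1) ≤ t i} := by ext t; simp [hi1, hi2]
          rw [this]
          exact isClosed_le (continuous_apply (i + 1)) (continuous_apply i)
        · have : {t : ℕ → ℝ | b - 1 ≤ i → i < a → t (i + 1) ≤ t i} = univ := by
            ext t; simp [hi2]
          rw [this]; exact isClosed_univ
      · have : {t : ℕ → ℝ | b - 1 ≤ i → i < a → t (i + 1) ≤ t i} = univ := by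
          ext t; simp [hi1]
        rw [this]; exact isClosed_univ
    have : {t : ℕ → ℝ | IsPathJT a b x y t} =
        {t : ℕ → ℝ | t a = x} ∩ ({t : ℕ → ℝ | t (b - 1) = y} ∩
          {t : ℕ → ℝ | ∀ i : ℕ, b - 1 ≤ i → i < a → t (i + 1) ≤ t i}) := by
      ext t; exact Iff.rfl
    rw [this]
    exact h1.inter (h2.inter h3)
  have hKcomp : IsCompact K :=
    (isCompact_univ_pi fun _ => isCompact_Icc).inter_right hKcl
  -- K is nonempty
  have hb1a : b - 1 < a := lt_of_lt_of_le (Nat.sub_lt hb Nat.one_pos) hba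
  have hKne : K.Nonempty := by
    refine ⟨fun i => if a ≤ i then x else y, ?_, ?_, ?_, ?_⟩
    · intro i _
      by_cases h : a ≤ i <;> simp [h, le_refl, hxy]
    · simp
    · simp [Nat.not_le.mpr hb1a]
    · intro i _ hia
      by_cases h : a ≤ i + 1 <;> simp [h, Nat.not_le.mpr hia, hxy, le_refl]
  -- membership gives values in Icc
  have hmem : ∀ u ∈ K, ∀ i : ℕ, u i ∈ Icc x y := fun u hu i => hu.1 i (mem_univ i)
  -- pathLen is usc on K
  have husc : ∀ t ∈ K, UpperSemicontinuousWithinAt (pathLen f a b) K t := by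
    intro t ht
    apply upperSemicontinuousWithinAt_sum
    intro i hi
    rw [Finset.mem_Icc] at hi
    have hi1 : 1 ≤ i := le_trans hb hi.1
    have hin : i ≤ n := le_trans hi.2 han
    have hci := hcad i hi1 hin
    have hji := hjmp i hi1 hin
    have hadd : UpperSemicontinuousWithinAt
        (fun u : ℕ → ℝ => f i (u (i - 1)) + -lml (f i) (u i)) K t := by
      apply UpperSemicontinuousWithinAt.add
      · exact usc_comp_eval (i - 1) (fun u hu => hmem u hu (i - 1))
          (usc_of_cadlag hci hji hx (hmem t ht (i - 1)))
      · exact usc_comp_eval_neg i (fun u hu => hmem u hu i)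
          (lsc_lml hci hji hx (hmem t ht i))
    simpa [sub_eq_add_neg] using hadd
  -- take the maximizer
  obtain ⟨t, htK, htmax⟩ := usc_exists_max hKcomp hKne husc
  refine ⟨t, htK.2, ?_⟩
  intro s hs
  -- clamp s into K
  set s' : ℕ → ℝ := fun i => if b - 1 ≤ i ∧ i ≤ a then s i else x with hs'def
  have hs'path : IsPathJT a b x y s' := by
    refine ⟨?_, ?_, ?_⟩
    · simp only [hs'def]
      rw [if_pos ⟨le_of_lt hb1a, le_refl a⟩]
      exact hs.1
    · simp only [hs'def]
      rw [if_pos ⟨le_refl _, le_of_lt hb1a⟩]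
      exact hs.2.1
    · intro i h1 h2
      simp only [hs'def]
      rw [if_pos ⟨le_trans h1 (Nat.le_succ i), Nat.succ_le_of_lt h2⟩,
        if_pos ⟨h1, le_of_lt h2⟩]
      exact hs.2.2 i h1 h2
  have hs'K : s' ∈ K := by
    refine ⟨?_, hs'path⟩
    intro i _
    simp only [hs'def]
    by_cases h : b - 1 ≤ i ∧ i ≤ a
    · rw [if_pos h]
      constructor
      · rw [← hs.1]
        exact path_mono hs.2.2 h.1 a h.2 (le_refl a)
      · rw [← hs.2.1]
        exact path_mono hs.2.2 (le_refl (b - 1)) i h.1 (le_trans h.2 (le_refl a)) |>.trans (le_refl _) |>.trans (le_refl _)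
    · rw [if_neg h]
      exact ⟨le_refl x, hxy⟩
  have hlen : pathLen f a b s = pathLen f a b s' := by
    unfold pathLen
    apply Finset.sum_congr rfl
    intro i hi
    rw [Finset.mem_Icc] at hi
    have h1 : s' (i - 1) = s (i - 1) := by
      simp only [hs'def]
      rw [if_pos ⟨Nat.sub_le_sub_right hi.1 1, le_trans (Nat.sub_le i 1) hi.2⟩]
    have h2 : s' i = s i := by
      simp only [hs'def]
      rw [if_pos ⟨le_trans (Nat.sub_le b 1) hi.1, hi.2⟩]
    rw [h1, h2]
  rw [hlen]
  exact htmax s' hs'K
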